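/- The PTA Kemeny rule satisfies PTA Condorcet consistency: if S is a schedule minimizing the weighted Kendall tau score Δ_PTA(·,P) over all schedules, and a PTA Condorcet consistent schedule exists for profile P, then S is PTA Condorcet consistent, i.e., for every pair of tasks a, b, if at least (p_a/(p_a+p_b))·v voters schedule a before b in their preferences then a is scheduled before b in S. -/

import Mathlib

open Finset

/-- Weighted Kendall tau (PTA Kemeny) score of schedule `S` w.r.t. profile `P`:
for each voter and each pair on which `S` places `a` before `b` but the voter places
`b` before `a`, count `p a`. -/
noncomputable def deltaPTA {n v : ℕ} (p : Fin n → ℝ) (P : Fin v → Equiv.Perm (Fin n))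
    (S : Equiv.Perm (Fin n)) : ℝ :=
  ∑ k, ∑ a, ∑ b, if S a < S b ∧ P k b < P k a then p a else 0

/-- `S` is PTA Condorcet consistent with profile `P`: whenever at least
`(p a/(p a + p b))·v` voters schedule `a` before `b`, `a` is before `b` in `S`. -/
def PTACondorcet {n v : ℕ} (p : Fin n → ℝ) (P : Fin v → Equiv.Perm (Fin n))
    (S : Equiv.Perm (Fin n)) : Prop :=
  ∀ a b : Fin n, a ≠ b →
    p a / (p a + p b) * v ≤ ((Finset.univ.filter (fun k => P k a < P k b)).card : ℝ) →
    S a < S b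

noncomputable def wgt {n v : ℕ} (p : Fin n → ℝ) (P : Fin v → Equiv.Perm (Fin n)) (a b : Fin n) : ℝ :=
  ((univ.filter fun k => P k b < P k a).card : ℝ) * p a

lemma wgt_self {n v : ℕ} (p : Fin n → ℝ) (P : Fin v → Equiv.Perm (Fin n)) (a : Fin n) :
    wgt p P a a = 0 := by
  simp [wgt]

lemma delta_eq_w {n v : ℕ} (p : Fin n → ℝ) (P : Fin v → Equiv.Perm (Fin n)) (S : Equiv.Perm (Fin n)) :
    deltaPTA p P S = ∑ a, ∑ b, if S a < S b then wgt p P a b else 0 := by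
  unfold deltaPTA
  rw [Finset.sum_comm]
  refine Finset.sum_congr rfl fun a _ => ?_
  rw [Finset.sum_comm]
  refine Finset.sum_congr rfl fun b _ => ?_
  by_cases h : S a < S b
  · simp only [h, true_and, if_true]
    rw [wgt, ← Finset.sum_filter, Finset.sum_const, nsmul_eq_mul]
  · simp [h]

lemma card_split {n v : ℕ} (P : Fin v → Equiv.Perm (Fin n)) {a b : Fin n} (hab : a ≠ b) :
    (univ.filter fun k => P k a < P k b).card + (univ.filter fun k => P k b < P k a).card = v := by
  have h2 : (univ.filter fun k => P k b < P k a) = (univ.filter fun k => ¬ P k a < P k b) := by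
    apply Finset.filter_congr
    intro k _
    simp only [not_lt, eq_iff_iff]
    constructor
    · exact fun h => h.le
    · intro h
      exact lt_of_le_of_ne h ((Equiv.injective (P k)).ne hab.symm)
  rw [h2, Finset.card_filter_add_card_filter_not, Finset.card_univ, Fintype.card_fin]

lemma thr_iff {n v : ℕ} (p : Fin n → ℝ) (hp : ∀ i, 0 < p i)
    (P : Fin v → Equiv.Perm (Fin n)) {a b : Fin n} (hab : a ≠ b) :
    (p a / (p a + p b) * v ≤ ((univ.filter fun k => P k a < P k b).card : ℝ)) ↔
      wgt p P a b ≤ wgt p P b a := by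
  have hpa := hp a; have hpb := hp b
  have hs : 0 < p a + p b := by linarith
  have hv : ((univ.filter fun k => P k a < P k b).card : ℝ)
      + ((univ.filter fun k => P k b < P k a).card : ℝ) = v := by
    exact_mod_cast card_split P hab
  rw [wgt, wgt, div_mul_eq_mul_div, div_le_iff₀ hs]
  set Na := ((univ.filter fun k => P k a < P k b).card : ℝ)
  set Nb := ((univ.filter fun k => P k b < P k a).card : ℝ)
  constructor <;> intro h <;> nlinarith

/-- The PTA Kemeny rule is PTA Condorcet consistent: any minimizer of the weighted Kendall
tau score is PTA Condorcet consistent, provided such a schedule exists. -/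
theorem stmt3 {n v : ℕ} (p : Fin n → ℝ) (hp : ∀ i, 0 < p i)
    (P : Fin v → Equiv.Perm (Fin n)) (S : Equiv.Perm (Fin n))
    (hmin : ∀ S', deltaPTA p P S ≤ deltaPTA p P S')
    (hex : ∃ S₀, PTACondorcet p P S₀) :
    PTACondorcet p P S := by
  classical
  obtain ⟨S₀, hS₀⟩ := hex
  set t : Equiv.Perm (Fin n) → Fin n → Fin n → ℝ :=
    fun S' a b => if S' a < S' b then wgt p P a b else 0 with ht
  set m : Fin n → Fin n → ℝ := fun a b => min (wgt p P a b) (wgt p P b a) with hm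
  -- double sum identity
  have hdouble : ∀ S' : Equiv.Perm (Fin n),
      2 * deltaPTA p P S' = ∑ a, ∑ b, (t S' a b + t S' b a) := by
    intro S'
    have h1 : ∑ a : Fin n, ∑ b : Fin n, t S' b a = ∑ a : Fin n, ∑ b : Fin n, t S' a b :=
      Finset.sum_comm
    simp only [Finset.sum_add_distrib]
    rw [h1, delta_eq_w]
    ring_nf
    rfl
  -- m is a termwise lower bound
  have hmle : ∀ (S' : Equiv.Perm (Fin n)) (a b : Fin n), m a b ≤ t S' a b + t S' b a := by
    intro S' a b
    by_cases hab : a = b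
    · subst hab
      simp [ht, hm, wgt_self]
    · rcases lt_trichotomy (S' a) (S' b) with h | h | h
      · have h2 : ¬ S' b < S' a := asymm h
        simp only [ht, if_pos h, if_neg h2, add_zero, hm]
        exact min_le_left _ _
      · exact absurd (S'.injective h) hab
      · have h2 : ¬ S' a < S' b := asymm h
        simp only [ht, if_pos h, if_neg h2, zero_add, hm]
        exact min_le_right _ _
  -- S₀ achieves the minimum on every pair
  have hS0eq : ∀ a b : Fin n, t S₀ a b + t S₀ b a = m a b := by
    intro a b
    by_cases hab : a = b
    · subst hab
      simp [ht, hm, wgt_self]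
    · rcases le_total (wgt p P a b) (wgt p P b a) with h | h
      · have hlt : S₀ a < S₀ b := hS₀ a b hab ((thr_iff p hp P hab).mpr h)
        have h2 : ¬ S₀ b < S₀ a := asymm hlt
        simp only [ht, if_pos hlt, if_neg h2, add_zero, hm]
        exact (min_eq_left h).symm
      · have hlt : S₀ b < S₀ a := hS₀ b a (Ne.symm hab) ((thr_iff p hp P (Ne.symm hab)).mpr h)
        have h2 : ¬ S₀ a < S₀ b := asymm hlt
        simp only [ht, if_pos hlt, if_neg h2, zero_add, hm]
        exact (min_eq_right h).symm
  -- termwise equality for the minimizer S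
  have key : ∀ a b : Fin n, t S a b + t S b a = m a b := by
    have hsum0 : ∑ a : Fin n, ∑ b : Fin n, (t S a b + t S b a - m a b) = 0 := by
      have h1 : ∑ a : Fin n, ∑ b : Fin n, (t S a b + t S b a - m a b)
          = 2 * deltaPTA p P S - 2 * deltaPTA p P S₀ := by
        rw [hdouble S, hdouble S₀]
        simp only [Finset.sum_sub_distrib]
        congr 1
        exact (Finset.sum_congr rfl fun a _ => Finset.sum_congr rfl fun b _ => (hS0eq a b).symm)
      have h2 : 2 * deltaPTA p P S - 2 * deltaPTA p P S₀ ≤ 0 := by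
        have := hmin S₀; linarith
      have h3 : 0 ≤ ∑ a : Fin n, ∑ b : Fin n, (t S a b + t S b a - m a b) :=
        Finset.sum_nonneg fun a _ => Finset.sum_nonneg fun b _ => by
          have := hmle S a b; linarith
      linarith [h1 ▸ h2]
    intro a b
    have hnn : ∀ a ∈ (univ : Finset (Fin n)),
        0 ≤ ∑ b : Fin n, (t S a b + t S b a - m a b) :=
      fun a _ => Finset.sum_nonneg fun b _ => by have := hmle S a b; linarith
    have h4 := (Finset.sum_eq_zero_iff_of_nonneg hnn).mp hsum0 a (Finset.mem_univ a)
    have hnn2 : ∀ b ∈ (univ : Finset (Fin n)), 0 ≤ t S a b + t S b a - m a b :=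
      fun b _ => by have := hmle S a b; linarith
    have h5 := (Finset.sum_eq_zero_iff_of_nonneg hnn2).mp h4 b (Finset.mem_univ b)
    linarith
  -- conclude
  intro a b hab hthr
  have hle : wgt p P a b ≤ wgt p P b a := (thr_iff p hp P hab).mp hthr
  have hstrict : wgt p P a b < wgt p P b a := by
    rcases lt_or_ge (wgt p P a b) (wgt p P b a) with h | h
    · exact h
    · exfalso
      have h1 : S₀ a < S₀ b := hS₀ a b hab ((thr_iff p hp P hab).mpr hle)
      have h2 : S₀ b < S₀ a := hS₀ b a (Ne.symm hab) ((thr_iff p hp P (Ne.symm hab)).mpr h)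
      exact absurd h2 (asymm h1)
  by_contra hnot
  have hba : S b < S a := by
    rcases lt_trichotomy (S a) (S b) with h | h | h
    · exact absurd h hnot
    · exact absurd (S.injective h) hab
    · exact h
  have hk := key a b
  have h2 : ¬ S a < S b := hnot
  rw [ht] at hk
  simp only [if_neg h2, if_pos hba, zero_add, hm] at hk
  rw [min_eq_left hle] at hk
  exact absurd hk (ne_of_gt hstrict)
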